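/- Let P, P̂ be Borel probability measures on a compact metric space 𝒴 and let ℋ be a universal RKHS on 𝒴 (i.e., ℋ is dense in C(𝒴) with respect to the sup norm) with bounded feature map Φ. If ‖Φ(P̂ₙ) − Φ(P)‖_ℋ → 0 as n → ∞ for a sequence of probability measures P̂ₙ, then ∫ f dP̂ₙ → ∫ f dP for every continuous function f : 𝒴 → ℝ, i.e., P̂ₙ converges weakly to P. -/

import Mathlib

open MeasureTheory Filter

/-- If `ℋ` is a universal RKHS on a compact metric space `𝒴` (every continuous function is
a uniform limit of RKHS functions `y ↦ ⟪f, Φ y⟫`) with bounded feature map `Φ`, and the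
MMD `‖Φ(P̂ₙ) − Φ(P)‖ → 0`, then `∫ f dP̂ₙ → ∫ f dP` for every continuous `f`, i.e., `P̂ₙ`
converges weakly to `P`. -/
theorem weak_convergence_of_mmd_tendsto_zero
    {𝒴 : Type*} [MetricSpace 𝒴] [CompactSpace 𝒴] [MeasurableSpace 𝒴] [BorelSpace 𝒴]
    {H : Type*} [NormedAddCommGroup H] [InnerProductSpace ℝ H] [CompleteSpace H]
    (Φ : 𝒴 → H) (hΦcont : Continuous Φ) (C : ℝ) (hΦbdd : ∀ y, ‖Φ y‖ ≤ C)
    (huniversal : ∀ (g : C(𝒴, ℝ)) (ε : ℝ), 0 < ε →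
      ∃ f : H, ∀ y, |(inner ℝ f (Φ y) : ℝ) - g y| < ε)
    (P : Measure 𝒴) [IsProbabilityMeasure P]
    (Pn : ℕ → Measure 𝒴) [∀ n, IsProbabilityMeasure (Pn n)]
    (hmmd : Tendsto (fun n => ‖(∫ y, Φ y ∂(Pn n)) - ∫ y, Φ y ∂P‖) atTop (nhds 0)) :
    ∀ f : C(𝒴, ℝ),
      Tendsto (fun n => ∫ y, f y ∂(Pn n)) atTop (nhds (∫ y, f y ∂P)) := by
  intro f
  have hΦint : ∀ (Q : Measure 𝒴) [IsProbabilityMeasure Q], Integrable Φ Q := by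
    intro Q _
    rw [← integrableOn_univ]
    exact hΦcont.continuousOn.integrableOn_compact isCompact_univ
  have hfint : ∀ (Q : Measure 𝒴) [IsProbabilityMeasure Q], Integrable (fun y => f y) Q := by
    intro Q _
    rw [← integrableOn_univ]
    exact f.continuous.continuousOn.integrableOn_compact isCompact_univ
  rw [Metric.tendsto_atTop]
  intro ε hε
  obtain ⟨h, hh⟩ := huniversal f (ε / 4) (by linarith)
  -- eventually ‖h‖ * mmd < ε/4
  have h1 : Tendsto (fun n => ‖h‖ * ‖(∫ y, Φ y ∂(Pn n)) - ∫ y, Φ y ∂P‖) atTop (nhds 0) := by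
    simpa using hmmd.const_mul ‖h‖
  rw [Metric.tendsto_atTop] at h1
  obtain ⟨N, hN⟩ := h1 (ε / 4) (by linarith)
  refine ⟨N, fun n hn => ?_⟩
  have key : ∀ (Q : Measure 𝒴) [IsProbabilityMeasure Q],
      |∫ y, f y ∂Q - (inner ℝ h (∫ y, Φ y ∂Q) : ℝ)| ≤ ε / 4 := by
    intro Q _
    have hi : Integrable (fun y => (inner ℝ h (Φ y) : ℝ)) Q := by
      rw [← integrableOn_univ]
      exact (continuous_const.inner hΦcont).continuousOn.integrableOn_compact isCompact_univ
    rw [← integral_inner (hΦint Q) h, ← integral_sub (hfint Q) hi]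
    calc |∫ y, (f y - (inner ℝ h (Φ y) : ℝ)) ∂Q| = ‖∫ y, (f y - (inner ℝ h (Φ y) : ℝ)) ∂Q‖ :=
          (Real.norm_eq_abs _).symm
      _ ≤ ∫ y, ‖f y - (inner ℝ h (Φ y) : ℝ)‖ ∂Q := norm_integral_le_integral_norm _
      _ ≤ ∫ _, (ε / 4) ∂Q := by
          apply integral_mono_of_nonneg (Filter.Eventually.of_forall fun y => norm_nonneg _)
            (integrable_const _)
          refine Filter.Eventually.of_forall fun y => ?_
          show ‖f y - (inner ℝ h (Φ y) : ℝ)‖ ≤ ε / 4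
          rw [Real.norm_eq_abs, abs_sub_comm]
          exact (hh y).le
      _ = ε / 4 := by simp
  have hinner : |(inner ℝ h ((∫ y, Φ y ∂(Pn n)) - ∫ y, Φ y ∂P) : ℝ)| ≤
      ‖h‖ * ‖(∫ y, Φ y ∂(Pn n)) - ∫ y, Φ y ∂P‖ := abs_real_inner_le_norm h _
  have hNn := hN n hn
  rw [Real.dist_eq, sub_zero] at hNn
  have hNn' : ‖h‖ * ‖(∫ y, Φ y ∂(Pn n)) - ∫ y, Φ y ∂P‖ < ε / 4 := lt_of_abs_lt hNn
  rw [Real.dist_eq]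
  have k1 := key (Pn n)
  have k2 := key P
  have e1 : (inner ℝ h ((∫ y, Φ y ∂(Pn n)) - ∫ y, Φ y ∂P) : ℝ) =
      (inner ℝ h (∫ y, Φ y ∂(Pn n)) : ℝ) - inner ℝ h (∫ y, Φ y ∂P) := inner_sub_right ..
  have e2 : ∫ y, f y ∂(Pn n) - ∫ y, f y ∂P =
      (∫ y, f y ∂(Pn n) - (inner ℝ h (∫ y, Φ y ∂(Pn n)) : ℝ)) +
      (inner ℝ h ((∫ y, Φ y ∂(Pn n)) - ∫ y, Φ y ∂P) : ℝ) -
      (∫ y, f y ∂P - (inner ℝ h (∫ y, Φ y ∂P) : ℝ)) := by rw [e1]; ring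
  rw [e2]
  set A := ∫ y, f y ∂(Pn n) - (inner ℝ h (∫ y, Φ y ∂(Pn n)) : ℝ) with hA
  set B := (inner ℝ h ((∫ y, Φ y ∂(Pn n)) - ∫ y, Φ y ∂P) : ℝ) with hB
  set D := ∫ y, f y ∂P - (inner ℝ h (∫ y, Φ y ∂P) : ℝ) with hD
  have t1 : |A + B - D| ≤ |A| + |B| + |D| :=
    (abs_sub (A + B) D).trans (add_le_add_left (abs_add_le A B) _)
  have t2 : |B| < ε / 4 := hinner.trans_lt hNn'
  linarith
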